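/- Let β(ω) = (1+|ω|)^{-1} and let ψ ∈ L²(ℝ) have Fourier transform ψ̂(z) = (1+z)·χ_{[−1,1]}(z). Then for every f ∈ L²(ℝ) with |f̂(ξ)| ≥ 1 for a.e. ξ ∈ [−1,1], the double integral ∫_ℝ ∫_ℝ |f̂(ξ)|² |ψ̂(β(ω)(ξ−ω))|² β(ω) dξ dω = +∞. In particular, the exist f ∈ L¹(ℝ)∩L²(ℝ) whose analysis transform V_ψ f(x,ω) = ⟨f, M_ω T_x D_{β(ω)} ψ⟩ does not lie in L²(ℝ², dx dω), so the system Ψ(x,ω) = M_ω T_x D_{β(ω)}ψ is not Bessel even though it belongs to a reproducing pair. -/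

import Mathlib

open MeasureTheory ComplexConjugate
open scoped InnerProductSpace FourierTransform ENNReal

/-- The window `ψ̂(z) = (1+z) χ_{[-1,1]}(z)`. -/
noncomputable def psiHatFn (z : ℝ) : ℂ := if |z| ≤ 1 then ((1 + z : ℝ) : ℂ) else 0

open scoped Real in
lemma psiHat_lb {ω ξ : ℝ} (hω : ω ≤ -1) (hξ : ξ ∈ Set.Icc (-1:ℝ) 1) :
    1 ≤ ‖psiHatFn ((1 + |ω|)⁻¹ * (ξ - ω))‖ := by
  obtain ⟨hξ1, hξ2⟩ := hξ
  have habs : |ω| = -ω := abs_of_neg (by linarith)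
  have hden : (0:ℝ) < 1 - ω := by linarith
  set z := (1 + |ω|)⁻¹ * (ξ - ω) with hz
  have hz' : z = (1 - ω)⁻¹ * (ξ - ω) := by rw [hz, habs]; ring_nf
  have hz0 : 0 ≤ z := by
    rw [hz']; exact mul_nonneg (inv_nonneg.2 hden.le) (by linarith)
  have hz1 : z ≤ 1 := by
    rw [hz', inv_mul_le_iff₀ hden]; linarith
  rw [psiHatFn, if_pos (abs_le.2 ⟨by linarith, hz1⟩), Complex.norm_real, Real.norm_eq_abs,
    abs_of_nonneg (by linarith)]
  linarith

lemma top_inv_Ioi : ∫⁻ x in Set.Ioi (1:ℝ), ENNReal.ofReal x⁻¹ = ⊤ := by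
  by_contra h
  have hne : IntegrableOn (fun x : ℝ => x⁻¹) (Set.Ioi 1) := by
    refine ⟨measurable_inv.aestronglyMeasurable, ?_⟩
    rw [hasFiniteIntegral_iff_ofReal]
    · exact lt_top_iff_ne_top.2 h
    · exact (ae_restrict_iff' measurableSet_Ioi).2 (ae_of_all _ fun x hx =>
        inv_nonneg.2 (le_of_lt (lt_trans one_pos hx)))
  have h2 : IntegrableOn (fun x : ℝ => x ^ (-1 : ℝ)) (Set.Ioi 1) := by
    refine hne.congr_fun ?_ measurableSet_Ioi
    intro x hx
    exact (Real.rpow_neg_one x).symm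
  have := (integrableOn_Ioi_rpow_iff zero_lt_one).1 h2
  linarith

lemma top_inv_Iic : ∫⁻ ω in Set.Iic (-1:ℝ), ENNReal.ofReal (1 - ω)⁻¹ = ⊤ := by
  have hemb : MeasurableEmbedding (fun x : ℝ => -x) :=
    (MeasurableEquiv.neg ℝ).measurableEmbedding
  have hmp : MeasurePreserving (fun x : ℝ => -x) (volume : Measure ℝ) volume :=
    Measure.measurePreserving_neg _
  have hpre : (fun x : ℝ => -x) ⁻¹' Set.Iic (-1) = Set.Ici 1 := by
    ext x; simp [neg_le_neg_iff]
  have key := hmp.setLIntegral_comp_preimage_emb hemb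
      (fun ω => ENNReal.ofReal (1 - ω)⁻¹) (Set.Iic (-1))
  rw [hpre] at key
  rw [← key]
  simp only [sub_neg_eq_add]
  rw [eq_top_iff]
  calc (⊤ : ℝ≥0∞) = ENNReal.ofReal 2⁻¹ * ⊤ := by
        rw [ENNReal.mul_top (by norm_num)]
    _ = ENNReal.ofReal 2⁻¹ * ∫⁻ x in Set.Ioi (1:ℝ), ENNReal.ofReal x⁻¹ := by rw [top_inv_Ioi]
    _ = ∫⁻ x in Set.Ioi (1:ℝ), ENNReal.ofReal 2⁻¹ * ENNReal.ofReal x⁻¹ := by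
        rw [lintegral_const_mul' _ _ (by norm_num)]
    _ ≤ ∫⁻ x in Set.Ici (1:ℝ), ENNReal.ofReal 2⁻¹ * ENNReal.ofReal x⁻¹ :=
        lintegral_mono_set Set.Ioi_subset_Ici_self
    _ ≤ ∫⁻ x in Set.Ici (1:ℝ), ENNReal.ofReal (1 + x)⁻¹ := by
        refine setLIntegral_mono (((measurable_const.add measurable_id).inv).ennreal_ofReal)
          fun x hx => ?_
        have hx1 : (1:ℝ) ≤ x := hx
        rw [← ENNReal.ofReal_mul (by norm_num)]
        refine ENNReal.ofReal_le_ofReal ?_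
        rw [← one_div, ← one_div, div_mul_div_comm, one_mul, ← one_div]
        apply one_div_le_one_div_of_le (by linarith)
        linarith

lemma stmt19_part1 (fhat : ℝ → ℂ)
    (hlb : ∀ᵐ ξ ∂(volume : Measure ℝ), ξ ∈ Set.Icc (-1 : ℝ) 1 → 1 ≤ ‖fhat ξ‖) :
    (∫⁻ ω : ℝ, ∫⁻ ξ : ℝ, ENNReal.ofReal
        (‖fhat ξ‖ ^ 2 * ‖psiHatFn ((1 + |ω|)⁻¹ * (ξ - ω))‖ ^ 2 * (1 + |ω|)⁻¹)) = ⊤ := by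
  have h1 : ∀ ω ∈ Set.Iic (-1:ℝ), ENNReal.ofReal (1 - ω)⁻¹ ≤
      ∫⁻ ξ : ℝ, ENNReal.ofReal
        (‖fhat ξ‖ ^ 2 * ‖psiHatFn ((1 + |ω|)⁻¹ * (ξ - ω))‖ ^ 2 * (1 + |ω|)⁻¹) := by
    intro ω hω
    have hω' : ω ≤ -1 := hω
    have habs : |ω| = -ω := abs_of_neg (by linarith)
    have hden : (0:ℝ) < 1 - ω := by linarith
    calc ENNReal.ofReal (1 - ω)⁻¹
        ≤ ENNReal.ofReal 2 * ENNReal.ofReal (1 - ω)⁻¹ :=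
          le_mul_of_one_le_left (by positivity) (by
            rw [show (1:ℝ≥0∞) = ENNReal.ofReal 1 by simp]
            exact ENNReal.ofReal_le_ofReal one_le_two)
      _ = volume (Set.Icc (-1:ℝ) 1) * ENNReal.ofReal (1 - ω)⁻¹ := by
          rw [Real.volume_Icc]; norm_num
      _ = ∫⁻ _ in Set.Icc (-1:ℝ) 1, ENNReal.ofReal (1 - ω)⁻¹ := by
          rw [setLIntegral_const, mul_comm]
      _ ≤ ∫⁻ ξ in Set.Icc (-1:ℝ) 1, ENNReal.ofReal
            (‖fhat ξ‖ ^ 2 * ‖psiHatFn ((1 + |ω|)⁻¹ * (ξ - ω))‖ ^ 2 * (1 + |ω|)⁻¹) := by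
          refine lintegral_mono_ae ?_
          filter_upwards [ae_restrict_of_ae hlb, ae_restrict_mem measurableSet_Icc]
            with ξ hf hmem
          have hf1 : 1 ≤ ‖fhat ξ‖ := hf hmem
          have hp1 : 1 ≤ ‖psiHatFn ((1 + |ω|)⁻¹ * (ξ - ω))‖ := psiHat_lb hω' hmem
          refine ENNReal.ofReal_le_ofReal ?_
          have h0 : (0:ℝ) ≤ (1 + |ω|)⁻¹ := inv_nonneg.2 (by positivity)
          have : (1 + |ω|)⁻¹ = (1 - ω)⁻¹ := by rw [habs]; ring_nf
          rw [← this]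
          have ha : 1 ≤ ‖fhat ξ‖ ^ 2 := by nlinarith
          have hb : 1 ≤ ‖psiHatFn ((1 + |ω|)⁻¹ * (ξ - ω))‖ ^ 2 := by nlinarith
          calc (1 + |ω|)⁻¹ = 1 * (1 + |ω|)⁻¹ := (one_mul _).symm
            _ ≤ ‖fhat ξ‖ ^ 2 * ‖psiHatFn ((1 + |ω|)⁻¹ * (ξ - ω))‖ ^ 2 * (1 + |ω|)⁻¹ :=
              mul_le_mul_of_nonneg_right (by nlinarith) h0
      _ ≤ _ := setLIntegral_le_lintegral _ _
  rw [eq_top_iff, ← top_inv_Iic]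
  calc ∫⁻ ω in Set.Iic (-1:ℝ), ENNReal.ofReal (1 - ω)⁻¹
      ≤ ∫⁻ ω in Set.Iic (-1:ℝ), ∫⁻ ξ : ℝ, ENNReal.ofReal
          (‖fhat ξ‖ ^ 2 * ‖psiHatFn ((1 + |ω|)⁻¹ * (ξ - ω))‖ ^ 2 * (1 + |ω|)⁻¹) := by
        refine lintegral_mono_ae ?_
        filter_upwards [ae_restrict_mem measurableSet_Iic] with ω hω using h1 ω hω
    _ ≤ _ := setLIntegral_le_lintegral _ _

open scoped Real in
lemma stmt19_fourier_const_mul (c : ℂ) (g : ℝ → ℂ) (w : ℝ) :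
    𝓕 (fun x => c * g x) w = c * 𝓕 g w := by
  simp_rw [Real.fourier_real_eq_integral_exp_smul, smul_eq_mul, mul_left_comm,
    integral_const_mul]

open scoped Real in
lemma stmt19_gauss_fourier : 𝓕 (fun x : ℝ => Complex.exp (-↑π * x ^ 2)) =
    fun t : ℝ => Complex.exp (-↑π * t ^ 2) := by
  have h := fourier_gaussian_pi (b := 1) (by norm_num)
  simpa using h

open scoped Real in
lemma stmt19_gauss_int : Integrable (fun x : ℝ => Complex.exp (-↑π * x ^ 2)) volume := by
  simpa using integrable_cexp_neg_mul_sq (b := (π : ℂ)) (by simp [Real.pi_pos])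

open scoped Real in
lemma stmt19_gauss_norm (x : ℝ) : ‖Complex.exp (-↑π * x ^ 2)‖ = Real.exp (-π * x ^ 2) := by
  rw [Complex.norm_exp]
  congr 1
  have : ((x:ℂ) ^ 2) = ((x ^ 2 : ℝ) : ℂ) := by push_cast; ring
  rw [this, ← Complex.ofReal_neg, ← Complex.ofReal_mul, Complex.ofReal_re]

open scoped Real in
lemma stmt19_gauss_memLp : MemLp (fun x : ℝ => Complex.exp (-↑π * x ^ 2)) 2 volume := by
  rw [memLp_two_iff_integrable_sq_norm stmt19_gauss_int.aestronglyMeasurable]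
  have : Integrable (fun x : ℝ => Real.exp (-(2 * π) * x ^ 2)) volume :=
    integrable_exp_neg_mul_sq (by positivity)
  refine this.congr (Filter.Eventually.of_forall fun x => ?_)
  show Real.exp (-(2 * π) * x ^ 2) = ‖Complex.exp (-↑π * ↑x ^ 2)‖ ^ 2
  rw [stmt19_gauss_norm, ← Real.exp_nat_mul]
  congr 1; ring

/-- Let `β(ω) = (1+|ω|)⁻¹` and let `ψ ∈ L²(ℝ)` have
Fourier–Plancherel transform `ψ̂(z) = (1+z) χ_{[-1,1]}(z)` (here `F` is the Plancherel
transform on `L²(ℝ)`). Then for every `f ∈ L²(ℝ)` whose transform `fhat` satisfies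
`|fhat ξ| ≥ 1` for a.e. `ξ ∈ [-1,1]`, the double integral
`∫_ℝ ∫_ℝ |fhat ξ|² |ψ̂(β(ω)(ξ-ω))|² β(ω) dξ dω = +∞` — which by Plancherel equals
`∬ |V_ψ f(x,ω)|² dx dω`, so `V_ψ f ∉ L²(ℝ², dx dω)`. In particular there exists
`f ∈ L¹(ℝ) ∩ L²(ℝ)` whose analysis transform is not square-integrable: the system
`Ψ(x,ω) = M_ω T_x D_{β(ω)} ψ` is not Bessel, although it belongs to a reproducing
pair. -/
theorem stmt_19
    (F : Lp ℂ 2 (volume : Measure ℝ) ≃ₗᵢ[ℂ] Lp ℂ 2 (volume : Measure ℝ))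
    (hF : ∀ (f : ℝ → ℂ) (hf1 : Integrable f volume) (hf2 : MemLp f 2 volume),
        (F (hf2.toLp f) : ℝ → ℂ) =ᵐ[volume] 𝓕 f)
    (ψ : ℝ → ℂ) (hψ : MemLp ψ 2 volume)
    (hψhat : (F (hψ.toLp ψ) : ℝ → ℂ) =ᵐ[volume] psiHatFn) :
    (∀ (f : ℝ → ℂ) (hf : MemLp f 2 volume) (fhat : ℝ → ℂ),
      (F (hf.toLp f) : ℝ → ℂ) =ᵐ[volume] fhat →
      (∀ᵐ ξ ∂(volume : Measure ℝ), ξ ∈ Set.Icc (-1 : ℝ) 1 → 1 ≤ ‖fhat ξ‖) →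
      (∫⁻ ω : ℝ, ∫⁻ ξ : ℝ, ENNReal.ofReal
          (‖fhat ξ‖ ^ 2 * ‖psiHatFn ((1 + |ω|)⁻¹ * (ξ - ω))‖ ^ 2 * (1 + |ω|)⁻¹)) = ⊤) ∧
    (∃ (f : ℝ → ℂ) (hf1 : Integrable f volume) (hf : MemLp f 2 volume) (fhat : ℝ → ℂ),
      (F (hf.toLp f) : ℝ → ℂ) =ᵐ[volume] fhat ∧
      (∫⁻ ω : ℝ, ∫⁻ ξ : ℝ, ENNReal.ofReal
          (‖fhat ξ‖ ^ 2 * ‖psiHatFn ((1 + |ω|)⁻¹ * (ξ - ω))‖ ^ 2 * (1 + |ω|)⁻¹)) = ⊤) := by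
  constructor
  · intro f hf fhat _ hlb
    exact stmt19_part1 fhat hlb
  · set π' := Real.pi
    set f : ℝ → ℂ := fun x => (Real.exp π' : ℂ) * Complex.exp (-↑π' * x ^ 2) with hfdef
    have hf1 : Integrable f volume := stmt19_gauss_int.const_mul _
    have hf2 : MemLp f 2 volume := stmt19_gauss_memLp.const_mul _
    set fhat : ℝ → ℂ := fun ξ => (Real.exp π' : ℂ) * Complex.exp (-↑π' * ξ ^ 2) with hfhdef
    have h𝓕 : 𝓕 f = fhat := by
      funext w
      rw [hfdef]
      rw [stmt19_fourier_const_mul, stmt19_gauss_fourier]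
    have hae : (F (hf2.toLp f) : ℝ → ℂ) =ᵐ[volume] fhat := by
      refine (hF f hf1 hf2).trans ?_
      rw [h𝓕]
    have hlb : ∀ᵐ ξ ∂(volume : Measure ℝ), ξ ∈ Set.Icc (-1 : ℝ) 1 → 1 ≤ ‖fhat ξ‖ := by
      refine ae_of_all _ fun ξ hξ => ?_
      obtain ⟨h1, h2⟩ := hξ
      have : ‖fhat ξ‖ = Real.exp π' * Real.exp (-π' * ξ ^ 2) := by
        rw [hfhdef]
        simp only [norm_mul, Complex.norm_real, Real.norm_eq_abs,
          abs_of_pos (Real.exp_pos _)]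
        congr 1
        exact stmt19_gauss_norm ξ
      rw [this, ← Real.exp_add]
      rw [show (1:ℝ) = Real.exp 0 by simp]
      apply Real.exp_le_exp.2
      have hπ : 0 < π' := Real.pi_pos
      nlinarith [mul_nonneg hπ.le
        (mul_nonneg (sub_nonneg.2 h2) (by linarith : (0:ℝ) ≤ 1 + ξ))]
    exact ⟨f, hf1, hf2, fhat, hae, stmt19_part1 fhat hlb⟩
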